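/- arXiv:2108.06260 — 3 statements merged into one kernel-verified Lean document; each statement's English description precedes it below -/
import Mathlib

section
/- For every nonnegative integer n and all real x, y, the degenerate Bell polynomials satisfy the binomial-type addition formula Bel_{n,λ}(x+y) = ∑_{l=0}^{n} C(n,l) · Bel_{l,λ}(x) · Bel_{n−l,λ}(y). -/
open Finset

/-- Degenerate falling factorial `(x)_{n,λ}`. -/
noncomputable def degFall (lam x : ℝ) (n : ℕ) : ℝ := ∏ i ∈ Finset.range n, (x - i * lam)

/-- Degenerate Bell polynomial `Bel_{n,λ}(x) = e^{-x} ∑_{k≥0} (k)_{n,λ} x^k / k!`. -/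
noncomputable def Bel (lam x : ℝ) (n : ℕ) : ℝ :=
  Real.exp (-x) * ∑' k : ℕ, degFall lam (k : ℝ) n * x ^ k / (Nat.factorial k)

lemma degFall_succ (lam x : ℝ) (n : ℕ) :
    degFall lam x (n + 1) = degFall lam x n * (x - n * lam) := by
  simp [degFall, Finset.prod_range_succ]

lemma summable_aux (r : ℝ) (hr : 0 ≤ r) :
    ∀ (n : ℕ) (c : ℝ), 0 ≤ c → Summable (fun k : ℕ => ((k : ℝ) + c) ^ n * r ^ k / k.factorial) := by
  intro n
  induction n with
  | zero =>
    intro c _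
    simpa using Real.summable_pow_div_factorial r
  | succ n ih =>
    intro c hc
    rw [← summable_nat_add_iff 1]
    refine Summable.of_nonneg_of_le (fun k => ?_) (fun k => ?_)
      (((ih (c + 1) (by linarith)).mul_left ((1 + c) * r)))
    · have h1 : (0:ℝ) ≤ ((k+1:ℕ):ℝ) + c := by positivity
      have h2 : (0:ℝ) ≤ r ^ (k+1) := by positivity
      have h3 : (0:ℝ) < ((k+1).factorial : ℝ) := by positivity
      positivity
    · have e1 : (((k+1 : ℕ) : ℝ) + c) ^ (n+1) * r ^ (k+1) / ((k+1).factorial : ℝ)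
          = (((k : ℝ) + (c+1)) ^ n * r ^ k / k.factorial) * ((((k:ℝ)) + (c+1)) * r / ((k:ℝ)+1)) := by
        rw [Nat.factorial_succ]
        push_cast
        have hk : ((k:ℝ)+1) ≠ 0 := by positivity
        have hf : ((k.factorial : ℝ)) ≠ 0 := by positivity
        field_simp
        ring
      rw [e1, mul_comm ((1+c)*r)]
      apply mul_le_mul_of_nonneg_left
      · rw [div_le_iff₀ (by positivity)]
        nlinarith [mul_nonneg hr (mul_nonneg hc (Nat.cast_nonneg (α := ℝ) k))]
      · positivity

lemma abs_degFall_le (lam : ℝ) (n : ℕ) (a : ℝ) (ha : 0 ≤ a) :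
    |degFall lam a n| ≤ (a + n * |lam|) ^ n := by
  rw [degFall, Finset.abs_prod]
  calc ∏ i ∈ range n, |a - i * lam| ≤ ∏ i ∈ range n, (a + n * |lam|) := by
        apply Finset.prod_le_prod (fun i _ => abs_nonneg _)
        intro i hi
        have hin : (i : ℝ) ≤ (n : ℝ) := by
          exact_mod_cast Nat.le_of_lt (mem_range.mp hi)
        calc |a - i * lam| ≤ |a| + |(i:ℝ) * lam| := abs_sub _ _
          _ = a + i * |lam| := by rw [abs_of_nonneg ha, abs_mul, Nat.abs_cast]
          _ ≤ a + n * |lam| := by nlinarith [abs_nonneg lam]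
    _ = (a + n * |lam|) ^ n := by rw [Finset.prod_const, Finset.card_range]

lemma summable_bel_norm (lam x : ℝ) (m : ℕ) :
    Summable (fun k : ℕ => ‖degFall lam (k : ℝ) m * x ^ k / k.factorial‖) := by
  refine Summable.of_nonneg_of_le (fun k => norm_nonneg _) (fun k => ?_)
    (summable_aux |x| (abs_nonneg x) m (m * |lam|) (by positivity))
  rw [Real.norm_eq_abs, abs_div, abs_mul, abs_pow, Nat.abs_cast]
  gcongr
  exact abs_degFall_le lam m k (Nat.cast_nonneg k)

lemma degFall_add (lam a b : ℝ) (n : ℕ) :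
    degFall lam (a + b) n
      = ∑ l ∈ range (n + 1), (n.choose l : ℝ) * degFall lam a l * degFall lam b (n - l) := by
  induction n with
  | zero => simp [degFall]
  | succ n ih =>
    rw [degFall_succ, ih, Finset.sum_mul]
    have key : ∀ l ∈ range (n + 1),
        (n.choose l : ℝ) * degFall lam a l * degFall lam b (n - l) * (a + b - n * lam)
          = (n.choose l : ℝ) * (degFall lam a (l+1) * degFall lam b (n - l))
            + (n.choose l : ℝ) * (degFall lam a l * degFall lam b ((n - l) + 1)) := by
      intro l hl
      have hln : l ≤ n := Nat.lt_succ_iff.mp (mem_range.mp hl)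
      have hcast : ((n - l : ℕ) : ℝ) = (n : ℝ) - l := by rw [Nat.cast_sub hln]
      rw [degFall_succ, degFall_succ, hcast]
      ring
    rw [Finset.sum_congr rfl key, Finset.sum_add_distrib]
    rw [Finset.sum_range_succ' (fun m => ((n+1).choose m : ℝ) * degFall lam a m * degFall lam b (n + 1 - m)) (n+1)]
    have hR : ∀ i ∈ range (n+1),
        (((n+1).choose (i+1) : ℝ) * degFall lam a (i+1) * degFall lam b (n + 1 - (i+1)))
          = (n.choose i : ℝ) * (degFall lam a (i+1) * degFall lam b (n - i))
            + (n.choose (i+1) : ℝ) * (degFall lam a (i+1) * degFall lam b (n - i)) := by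
      intro i hi
      have h1 : n + 1 - (i+1) = n - i := by omega
      rw [h1, Nat.choose_succ_succ]
      push_cast
      ring
    rw [Finset.sum_congr rfl hR, Finset.sum_add_distrib]
    have hB : ∑ l ∈ range (n+1), (n.choose l : ℝ) * (degFall lam a l * degFall lam b ((n - l) + 1))
        = (∑ i ∈ range (n+1), (n.choose (i+1) : ℝ) * (degFall lam a (i+1) * degFall lam b (n - i)))
          + ((n+1).choose 0 : ℝ) * degFall lam a 0 * degFall lam b (n + 1 - 0) := by
      rw [Finset.sum_range_succ' (fun l => (n.choose l : ℝ) * (degFall lam a l * degFall lam b ((n - l) + 1))) n]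
      rw [Finset.sum_range_succ (fun i => (n.choose (i+1) : ℝ) * (degFall lam a (i+1) * degFall lam b (n - i))) n]
      simp only [Nat.choose_succ_self, Nat.cast_zero, zero_mul, add_zero]
      congr 1
      · apply Finset.sum_congr rfl
        intro i hi
        have hi' := mem_range.mp hi
        have : n - (i+1) + 1 = n - i := by omega
        rw [this]
      · simp [degFall]
    rw [hB]
    ring

lemma tsum_antidiag (h : ℕ × ℕ → ℝ) (hs : Summable h) :
    ∑' k : ℕ, ∑ kl ∈ Finset.HasAntidiagonal.antidiagonal k, h kl = ∑' p : ℕ × ℕ, h p := by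
  conv_lhs => congr; ext k; rw [← Finset.sum_finset_coe, ← tsum_fintype (L := SummationFilter.unconditional _)]
  rw [← Finset.HasAntidiagonal.sigmaAntidiagonalEquivProd.tsum_eq h]
  exact ((Finset.HasAntidiagonal.sigmaAntidiagonalEquivProd.summable_iff.mpr hs).tsum_sigma'
    (fun k => (hasSum_fintype _).summable)).symm

set_option maxHeartbeats 1000000 in
/-- the binomial-type addition formula for degenerate Bell polynomials. -/
theorem degenerate_bell_add (lam : ℝ) (n : ℕ) (x y : ℝ) :
    Bel lam (x + y) n =
      ∑ l ∈ range (n + 1), (n.choose l : ℝ) * Bel lam x l * Bel lam y (n - l) := by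
  have hcn : (0:ℝ) ≤ (n:ℝ) * |lam| := by positivity
  set c : ℝ := (n:ℝ) * |lam| + 1 with hcdef
  have hc0 : (0:ℝ) ≤ c := by linarith
  have hc1 : (1:ℝ) ≤ c := by linarith
  -- the double-indexed family
  set g : ℕ × ℕ → ℝ := fun p =>
    degFall lam ((p.1 : ℝ) + (p.2 : ℝ)) n * (x ^ p.1 / p.1.factorial) * (y ^ p.2 / p.2.factorial)
    with hgdef
  have hgsum : Summable g := by
    apply Summable.of_norm
    refine Summable.of_nonneg_of_le (fun p => norm_nonneg _) (fun p => ?_)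
      (Summable.mul_of_nonneg (summable_aux |x| (abs_nonneg x) n c hc0)
        (summable_aux |y| (abs_nonneg y) n c hc0)
        (fun k => by positivity) (fun k => by positivity))
    obtain ⟨i, j⟩ := p
    have hD : |degFall lam ((i : ℝ) + (j : ℝ)) n| ≤ ((i:ℝ)+c) ^ n * ((j:ℝ)+c) ^ n := by
      calc |degFall lam ((i : ℝ) + (j : ℝ)) n| ≤ (((i:ℝ)+(j:ℝ)) + n * |lam|) ^ n :=
            abs_degFall_le lam n _ (by positivity)
        _ ≤ (((i:ℝ)+c) * ((j:ℝ)+c)) ^ n := by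
            apply pow_le_pow_left₀ (by positivity)
            nlinarith [Nat.cast_nonneg (α := ℝ) i, Nat.cast_nonneg (α := ℝ) j]
        _ = ((i:ℝ)+c) ^ n * ((j:ℝ)+c) ^ n := mul_pow _ _ _
    have hXY : (0:ℝ) ≤ |x| ^ i / i.factorial * (|y| ^ j / j.factorial) := by positivity
    calc ‖g (i, j)‖
        = |degFall lam ((i : ℝ) + (j : ℝ)) n| * (|x| ^ i / i.factorial * (|y| ^ j / j.factorial)) := by
          simp only [hgdef, Real.norm_eq_abs, abs_mul, abs_div, abs_pow, Nat.abs_cast]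
          ring
      _ ≤ (((i:ℝ)+c) ^ n * ((j:ℝ)+c) ^ n) * (|x| ^ i / i.factorial * (|y| ^ j / j.factorial)) :=
          mul_le_mul_of_nonneg_right hD hXY
      _ = ((i:ℝ)+c) ^ n * |x| ^ i / i.factorial * (((j:ℝ)+c) ^ n * |y| ^ j / j.factorial) := by ring
  -- summability of each Bel-type series
  have hFsum : ∀ l m : ℕ, Summable (fun p : ℕ × ℕ =>
      (degFall lam (p.1 : ℝ) l * x ^ p.1 / p.1.factorial) *
        (degFall lam (p.2 : ℝ) m * y ^ p.2 / p.2.factorial)) := fun l m =>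
    summable_mul_of_summable_norm (summable_bel_norm lam x l) (summable_bel_norm lam y m)
  -- key computation for the series
  have hT : (∑' k : ℕ, degFall lam (k : ℝ) n * (x + y) ^ k / k.factorial)
      = ∑ l ∈ range (n + 1), (n.choose l : ℝ) *
          ((∑' k : ℕ, degFall lam (k : ℝ) l * x ^ k / k.factorial) *
            (∑' k : ℕ, degFall lam (k : ℝ) (n - l) * y ^ k / k.factorial)) := by
    calc (∑' k : ℕ, degFall lam (k : ℝ) n * (x + y) ^ k / k.factorial)
        = ∑' k : ℕ, ∑ kl ∈ Finset.HasAntidiagonal.antidiagonal k, g kl := by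
          apply tsum_congr
          intro k
          rw [Finset.Nat.sum_antidiagonal_eq_sum_range_succ (fun i j => g (i, j)) k, add_pow,
            Finset.mul_sum, Finset.sum_div]
          apply Finset.sum_congr rfl
          intro m hm
          have hmk : m ≤ k := Nat.lt_succ_iff.mp (mem_range.mp hm)
          have hcastk : ((m : ℝ) + ((k - m : ℕ) : ℝ)) = (k : ℝ) := by
            rw [Nat.cast_sub hmk]; ring
          have hch : (k.choose m : ℝ) = k.factorial / (m.factorial * (k - m).factorial) :=
            Nat.cast_choose ℝ hmk
          simp only [hgdef, hcastk, hch]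
          have h1 : (m.factorial : ℝ) ≠ 0 := by positivity
          have h2 : ((k - m).factorial : ℝ) ≠ 0 := by positivity
          have h3 : (k.factorial : ℝ) ≠ 0 := by positivity
          field_simp
      _ = ∑' p : ℕ × ℕ, g p := tsum_antidiag g hgsum
      _ = ∑' p : ℕ × ℕ, ∑ l ∈ range (n + 1), (n.choose l : ℝ) *
            ((degFall lam (p.1 : ℝ) l * x ^ p.1 / p.1.factorial) *
              (degFall lam (p.2 : ℝ) (n - l) * y ^ p.2 / p.2.factorial)) := by
          apply tsum_congr
          intro p
          simp only [hgdef]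
          rw [degFall_add, Finset.sum_mul, Finset.sum_mul]
          apply Finset.sum_congr rfl
          intro l _
          ring
      _ = ∑ l ∈ range (n + 1), ∑' p : ℕ × ℕ, (n.choose l : ℝ) *
            ((degFall lam (p.1 : ℝ) l * x ^ p.1 / p.1.factorial) *
              (degFall lam (p.2 : ℝ) (n - l) * y ^ p.2 / p.2.factorial)) :=
          Summable.tsum_finsetSum (fun l _ => (hFsum l (n - l)).mul_left _)
      _ = ∑ l ∈ range (n + 1), (n.choose l : ℝ) *
            ((∑' k : ℕ, degFall lam (k : ℝ) l * x ^ k / k.factorial) *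
              (∑' k : ℕ, degFall lam (k : ℝ) (n - l) * y ^ k / k.factorial)) := by
          apply Finset.sum_congr rfl
          intro l _
          rw [tsum_mul_left,
            tsum_mul_tsum_of_summable_norm (summable_bel_norm lam x l) (summable_bel_norm lam y (n - l))]
  -- assemble
  simp only [Bel]
  rw [hT, neg_add, Real.exp_add, Finset.mul_sum]
  apply Finset.sum_congr rfl
  intro l _
  ring
end

section
/- The degenerate Stirling numbers of the second kind satisfy the recurrence S_{2,λ}(n+1,k) = S_{2,λ}(n,k−1) + (k − nλ)·S_{2,λ}(n,k) for 0 ≤ k ≤ n+1 (with the convention S_{2,λ}(n,−1) = 0 and S_{2,λ}(n,j) = 0 for j > n). -/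
open Finset

/-- Ordinary falling factorial `(x)_k`. -/
noncomputable def fall (x : ℝ) (k : ℕ) : ℝ := ∏ i ∈ Finset.range k, (x - i)

lemma fall_nat_eq_zero (m k : ℕ) (h : m < k) : fall (m : ℝ) k = 0 :=
  Finset.prod_eq_zero (Finset.mem_range.2 h) (by simp)

lemma fall_self (k : ℕ) : fall (k : ℝ) k = Nat.factorial k := by
  induction k with
  | zero => simp [fall]
  | succ k ih =>
    have : fall ((k+1 : ℕ) : ℝ) (k+1) = (∏ i ∈ Finset.range k, (((k+1:ℕ):ℝ) - (i+1))) * (((k+1:ℕ):ℝ) - 0) := by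
      simp [fall, Finset.prod_range_succ']
    rw [this]
    have h2 : (∏ i ∈ Finset.range k, (((k+1:ℕ):ℝ) - (i+1))) = fall (k : ℝ) k := by
      apply Finset.prod_congr rfl
      intro i _
      push_cast; ring
    rw [h2, ih]
    push_cast [Nat.factorial_succ]
    ring

lemma fall_unique (N : ℕ) (c : ℕ → ℝ)
    (h : ∀ x : ℝ, ∑ k ∈ Finset.range N, c k * fall x k = 0) :
    ∀ k, k < N → c k = 0 := by
  intro k
  induction k using Nat.strong_induction_on with
  | _ k ih =>
    intro hk
    have h1 := h (k : ℝ)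
    have hsub : Finset.range (k+1) ⊆ Finset.range N := Finset.range_subset_range.2 hk
    have h2 : ∑ j ∈ Finset.range N, c j * fall (k : ℝ) j
        = ∑ j ∈ Finset.range (k+1), c j * fall (k : ℝ) j := by
      refine (Finset.sum_subset hsub ?_).symm
      intro j _ hj
      have : k < j := by
        simp only [Finset.mem_range, not_lt] at hj
        omega
      rw [fall_nat_eq_zero k j this, mul_zero]
    rw [h2, Finset.sum_range_succ] at h1
    have h3 : ∑ j ∈ Finset.range k, c j * fall (k : ℝ) j = 0 := by
      apply Finset.sum_eq_zero
      intro j hj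
      rw [ih j (Finset.mem_range.1 hj) (lt_trans (Finset.mem_range.1 hj) hk), zero_mul]
    rw [h3, zero_add, fall_self] at h1
    have : ((Nat.factorial k) : ℝ) ≠ 0 := Nat.cast_ne_zero.2 (Nat.factorial_ne_zero k)
    exact (mul_eq_zero.1 h1).resolve_right this

/-- the recurrence `S_{2,λ}(n+1,k) = S_{2,λ}(n,k−1) + (k − nλ) S_{2,λ}(n,k)`
for `0 ≤ k ≤ n+1`, with the conventions `S_{2,λ}(n,−1) = 0` and `S_{2,λ}(n,j) = 0` for `j > n`. -/
theorem degenerate_stirling_second_recurrence (lam : ℝ) (S2 : ℕ → ℕ → ℝ)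
    (hS2 : ∀ (n : ℕ) (x : ℝ), degFall lam x n = ∑ k ∈ range (n + 1), S2 n k * fall x k)
    (hzero : ∀ n k : ℕ, n < k → S2 n k = 0)
    (n : ℕ) (k : ℕ) (hk : k ≤ n + 1) :
    S2 (n + 1) k =
      (if k = 0 then 0 else S2 n (k - 1)) + ((k : ℝ) - n * lam) * S2 n k := by
  set T : ℕ → ℝ := fun k => (if k = 0 then 0 else S2 n (k - 1)) + ((k : ℝ) - n * lam) * S2 n k with hT
  have key : ∀ x : ℝ, ∑ j ∈ range (n + 2), (S2 (n+1) j - T j) * fall x j = 0 := by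
    intro x
    have h1 := hS2 (n+1) x
    have h2 := hS2 n x
    have hstep : degFall lam x (n+1) = degFall lam x n * (x - n * lam) := by
      simp [degFall, Finset.prod_range_succ]
    have hfall : ∀ j : ℕ, fall x (j+1) = fall x j * (x - j) := by
      intro j; simp [fall, Finset.prod_range_succ]
    -- expand the product
    have expand : (∑ j ∈ range (n+1), S2 n j * fall x j) * (x - n * lam)
        = ∑ j ∈ range (n+2), T j * fall x j := by
      have e1 : (∑ j ∈ range (n+1), S2 n j * fall x j) * (x - n * lam)
          = ∑ j ∈ range (n+1), (S2 n j * fall x (j+1) + ((j : ℝ) - n * lam) * S2 n j * fall x j) := by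
        rw [Finset.sum_mul]
        apply Finset.sum_congr rfl
        intro j _
        rw [hfall j]
        ring
      rw [e1, Finset.sum_add_distrib]
      have e2 : ∑ j ∈ range (n+1), S2 n j * fall x (j+1)
          = ∑ j ∈ range (n+2), (if j = 0 then 0 else S2 n (j-1)) * fall x j := by
        rw [Finset.sum_range_succ' (fun j => (if j = 0 then 0 else S2 n (j-1)) * fall x j) (n+1)]
        simp
      have e3 : ∑ j ∈ range (n+1), ((j : ℝ) - n * lam) * S2 n j * fall x j
          = ∑ j ∈ range (n+2), ((j : ℝ) - n * lam) * S2 n j * fall x j := by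
        rw [Finset.sum_range_succ (fun j => ((j : ℝ) - n * lam) * S2 n j * fall x j) (n+1),
          hzero n (n+1) (by omega)]
        ring
      rw [e2, e3, ← Finset.sum_add_distrib]
      apply Finset.sum_congr rfl
      intro j _
      simp only [hT]
      by_cases hj : j = 0 <;> simp [hj] <;> ring
    have : ∑ j ∈ range (n+2), S2 (n+1) j * fall x j = ∑ j ∈ range (n+2), T j * fall x j := by
      rw [← expand, ← h2, ← hstep, ← h1]
    simp only [sub_mul, Finset.sum_sub_distrib, this, sub_self]
  have := fall_unique (n+2) (fun j => S2 (n+1) j - T j) key k (by omega)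
  have h := sub_eq_zero.1 this
  rw [h]
end

section
/- For every nonnegative integer n and all real x, x^n = ∑_{k=0}^{n} (−1)^{n−k} · S_{1,λ}(n,k) · Bel_{k,λ}(x) · (−1)^{n−k}, i.e., x^n = ∑_{k=0}^{n} S_{1,λ}(n,k) · Bel_{k,λ}(x), exhibiting the inversion between the degenerate Stirling numbers of the first kind and the degenerate Bell polynomials. -/
open Finset

lemma fall_nat_eq_zero_s18 {j i : ℕ} (h : j < i) : fall (j : ℝ) i = 0 := by
  apply Finset.prod_eq_zero (Finset.mem_range.mpr h)
  simp

lemma fall_nat_self_ne_zero (j : ℕ) : fall (j : ℝ) j ≠ 0 := by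
  rw [fall, Finset.prod_ne_zero_iff]
  intro t ht
  have : (t : ℝ) < j := by exact_mod_cast Finset.mem_range.mp ht
  linarith

/-- Linear independence of falling factorials. -/
lemma fall_indep (m : ℕ) (c : ℕ → ℝ)
    (h : ∀ x : ℝ, ∑ j ∈ range (m + 1), c j * fall x j = 0) :
    ∀ j, j ≤ m → c j = 0 := by
  intro j
  induction j using Nat.strong_induction_on with
  | _ j ih =>
    intro hj
    have hx := h (j : ℝ)
    have hsum : ∑ i ∈ range (m + 1), c i * fall (j : ℝ) i = c j * fall (j : ℝ) j := by
      apply Finset.sum_eq_single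
      · intro i hi hne
        rcases lt_or_gt_of_ne hne with hlt | hgt
        · rw [ih i hlt (by omega), zero_mul]
        · rw [fall_nat_eq_zero_s18 hgt, mul_zero]
      · intro hmem
        exact absurd (Finset.mem_range.mpr (by omega)) hmem
    rw [hsum] at hx
    exact (mul_eq_zero.mp hx).resolve_right (fall_nat_self_ne_zero j)

lemma swap_sum (n : ℕ) (S1 S2 : ℕ → ℕ → ℝ) (f : ℕ → ℝ) :
    ∑ k ∈ range (n + 1), S1 n k * ∑ j ∈ range (k + 1), S2 k j * f j
      = ∑ j ∈ range (n + 1),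
          (∑ k ∈ range (n + 1), S1 n k * (if j ≤ k then S2 k j else 0)) * f j := by
  have inner : ∀ k ∈ range (n + 1),
      S1 n k * ∑ j ∈ range (k + 1), S2 k j * f j
        = ∑ j ∈ range (n + 1), S1 n k * ((if j ≤ k then S2 k j else 0) * f j) := by
    intro k hk
    rw [Finset.mul_sum]
    have heq : ∑ j ∈ range (k + 1), S1 n k * (S2 k j * f j)
        = ∑ j ∈ range (k + 1), S1 n k * ((if j ≤ k then S2 k j else 0) * f j) :=
      Finset.sum_congr rfl (fun j hj => by
        rw [if_pos (Nat.lt_succ_iff.mp (Finset.mem_range.mp hj))])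
    rw [heq]
    apply Finset.sum_subset (Finset.range_subset_range.mpr (by
      have := Finset.mem_range.mp hk; omega))
    intro j hjn hjk
    have : ¬ j ≤ k := by
      simp only [Finset.mem_range] at hjk; omega
    rw [if_neg this, zero_mul, mul_zero]
  rw [Finset.sum_congr rfl inner, Finset.sum_comm]
  apply Finset.sum_congr rfl
  intro j _
  rw [Finset.sum_mul]
  apply Finset.sum_congr rfl
  intro k _
  ring

/-- `x^n = ∑_{k=0}^n S_{1,λ}(n,k) Bel_{k,λ}(x)`, where `S_{1,λ}` are the degenerate
Stirling numbers of the first kind and `Bel_{k,λ}(x) = ∑_{j=0}^k S_{2,λ}(k,j) x^j`. -/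
theorem stirling_first_bell_inversion (lam : ℝ) (S1 S2 : ℕ → ℕ → ℝ)
    (hS1 : ∀ (n : ℕ) (x : ℝ), fall x n = ∑ k ∈ range (n + 1), S1 n k * degFall lam x k)
    (hS2 : ∀ (n : ℕ) (x : ℝ), degFall lam x n = ∑ k ∈ range (n + 1), S2 n k * fall x k)
    (n : ℕ) (x : ℝ) :
    x ^ n = ∑ k ∈ range (n + 1),
      (-1 : ℝ) ^ (n - k) * S1 n k * (∑ j ∈ range (k + 1), S2 k j * x ^ j) *
        (-1 : ℝ) ^ (n - k) := by
  set A : ℕ → ℝ := fun j => ∑ k ∈ range (n + 1), S1 n k * (if j ≤ k then S2 k j else 0) with hA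
  -- the composition is the identity on falling factorials
  have hcomp : ∀ y : ℝ, fall y n = ∑ j ∈ range (n + 1), A j * fall y j := by
    intro y
    rw [hS1 n y]
    have : ∀ k ∈ range (n + 1), S1 n k * degFall lam y k
        = S1 n k * ∑ j ∈ range (k + 1), S2 k j * fall y j := by
      intro k _; rw [hS2 k y]
    rw [Finset.sum_congr rfl this, swap_sum]
  -- hence A j = δ_{jn}
  have hdelta : ∀ j, j ≤ n → A j = if j = n then 1 else 0 := by
    have h0 : ∀ y : ℝ,
        ∑ j ∈ range (n + 1), (A j - if j = n then 1 else 0) * fall y j = 0 := by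
      intro y
      have hn : ∑ j ∈ range (n + 1), (if j = n then (1 : ℝ) else 0) * fall y j
          = fall y n := by
        rw [Finset.sum_eq_single n]
        · simp
        · intro i _ hne; rw [if_neg hne, zero_mul]
        · intro hmem; exact absurd (Finset.mem_range.mpr (by omega)) hmem
      have := hcomp y
      calc ∑ j ∈ range (n + 1), (A j - if j = n then 1 else 0) * fall y j
          = (∑ j ∈ range (n + 1), A j * fall y j)
            - ∑ j ∈ range (n + 1), (if j = n then (1:ℝ) else 0) * fall y j := by
            rw [← Finset.sum_sub_distrib]
            apply Finset.sum_congr rfl; intro j _; ring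
        _ = 0 := by rw [hn, ← this]; ring
    intro j hj
    have := fall_indep n _ h0 j hj
    linarith [this]
  -- now compute the goal
  have hsimp : ∀ k ∈ range (n + 1),
      (-1 : ℝ) ^ (n - k) * S1 n k * (∑ j ∈ range (k + 1), S2 k j * x ^ j) *
        (-1 : ℝ) ^ (n - k)
      = S1 n k * ∑ j ∈ range (k + 1), S2 k j * x ^ j := by
    intro k _
    have : ((-1 : ℝ) ^ (n - k)) * ((-1 : ℝ) ^ (n - k)) = 1 := by
      rw [← pow_add]
      exact Even.neg_one_pow ⟨n - k, rfl⟩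
    calc (-1 : ℝ) ^ (n - k) * S1 n k * (∑ j ∈ range (k + 1), S2 k j * x ^ j) *
        (-1 : ℝ) ^ (n - k)
        = ((-1 : ℝ) ^ (n - k) * (-1 : ℝ) ^ (n - k)) *
            (S1 n k * ∑ j ∈ range (k + 1), S2 k j * x ^ j) := by ring
      _ = _ := by rw [this, one_mul]
  rw [Finset.sum_congr rfl hsimp, swap_sum n S1 S2 (fun j => x ^ j)]
  have : ∑ j ∈ range (n + 1), A j * x ^ j = x ^ n := by
    rw [Finset.sum_eq_single n]
    · rw [hdelta n le_rfl, if_pos rfl, one_mul]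
    · intro i hi hne
      rw [hdelta i (Nat.lt_succ_iff.mp (Finset.mem_range.mp hi)), if_neg hne, zero_mul]
    · intro hmem; exact absurd (Finset.mem_range.mpr (by omega)) hmem
  rw [← this]
end
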